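/- (Terras; Everett) For every k ≥ 1: (i) if m ≡ n (mod 2^k) then T^[j](m) ≡ T^[j](n) (mod 2) for all 0 ≤ j < k; and (ii) the induced map from ℤ/2^kℤ to (ℤ/2ℤ)^k sending the residue class of n to its parity vector (T^[0](n) mod 2, T^[1](n) mod 2, ..., T^[k−1](n) mod 2) is a bijection. -/

import Mathlib

/-- The 3x+1 function on the integers. -/
def T (x : ℤ) : ℤ := if x % 2 = 1 then (3 * x + 1) / 2 else x / 2

lemma T_two_mul_odd (x : ℤ) (h : x % 2 = 1) : 2 * T x = 3 * x + 1 := by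
  rw [T, if_pos h]; exact Int.mul_ediv_cancel' (by omega)

lemma T_two_mul_even (x : ℤ) (h : ¬ x % 2 = 1) : 2 * T x = x := by
  rw [T, if_neg h]; exact Int.mul_ediv_cancel' (by omega)

lemma T_step (k : ℕ) (m n : ℤ) (h : Int.ModEq (2 ^ (k + 1)) m n) :
    m % 2 = n % 2 ∧ Int.ModEq (2 ^ k) (T m) (T n) := by
  have h2 : m % 2 = n % 2 := h.of_dvd (dvd_pow_self 2 (Nat.succ_ne_zero k))
  obtain ⟨c, hc⟩ : (2 ^ (k + 1) : ℤ) ∣ n - m := h.dvd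
  refine ⟨h2, Int.modEq_iff_dvd.mpr ?_⟩
  rw [pow_succ] at hc
  by_cases hm : m % 2 = 1
  · have hn : n % 2 = 1 := by omega
    have e1 := T_two_mul_odd m hm
    have e2 := T_two_mul_odd n hn
    refine ⟨3 * c, mul_left_cancel₀ (two_ne_zero) ?_⟩
    linear_combination e2 - e1 + 3 * hc
  · have hn : ¬ n % 2 = 1 := by omega
    have e1 := T_two_mul_even m hm
    have e2 := T_two_mul_even n hn
    refine ⟨c, mul_left_cancel₀ (two_ne_zero) ?_⟩
    linear_combination e2 - e1 + hc

lemma iter_mod (j l : ℕ) : ∀ m n : ℤ, Int.ModEq (2 ^ (j + l)) m n →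
    Int.ModEq (2 ^ l) (T^[j] m) (T^[j] n) := by
  induction j with
  | zero => intro m n h; simpa using h
  | succ j ih =>
    intro m n h
    rw [Function.iterate_succ_apply, Function.iterate_succ_apply]
    refine ih _ _ ?_
    exact (T_step (j + l) m n (by rwa [show j + 1 + l = (j + l) + 1 by ring] at h)).2

lemma parity_inj : ∀ (k : ℕ) (m n : ℤ),
    (∀ j < k, Int.ModEq 2 (T^[j] m) (T^[j] n)) → Int.ModEq (2 ^ k) m n := by
  intro k
  induction k with
  | zero => intro m n _; simpa using Int.modEq_one
  | succ k ih =>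
    intro m n h
    have h0 : m % 2 = n % 2 := by simpa [Int.ModEq] using h 0 (Nat.succ_pos k)
    have hT : Int.ModEq (2 ^ k) (T m) (T n) := by
      refine ih (T m) (T n) (fun j hj => ?_)
      have := h (j + 1) (by omega)
      rwa [Function.iterate_succ_apply, Function.iterate_succ_apply] at this
    obtain ⟨c, hc⟩ : (2 ^ k : ℤ) ∣ T n - T m := hT.dvd
    refine Int.modEq_iff_dvd.mpr ?_
    by_cases hm : m % 2 = 1
    · have hn : n % 2 = 1 := by omega
      have e1 := T_two_mul_odd m hm
      have e2 := T_two_mul_odd n hn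
      have hdvd : (2 ^ (k + 1) : ℤ) ∣ (n - m) * 3 :=
        ⟨c, by rw [pow_succ]; linear_combination 2 * hc - e2 + e1⟩
      have hcop : IsCoprime ((2 : ℤ) ^ (k + 1)) 3 :=
        (Int.isCoprime_iff_gcd_eq_one.mpr (by norm_num)).pow_left
      exact hcop.dvd_of_dvd_mul_right hdvd
    · have hn : ¬ n % 2 = 1 := by omega
      have e1 := T_two_mul_even m hm
      have e2 := T_two_mul_even n hn
      exact ⟨c, by rw [pow_succ]; linear_combination 2 * hc - e2 + e1⟩

/-- (Terras; Everett) For every `k ≥ 1`: (i) if `m ≡ n (mod 2^k)` then the first `k`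
iterates of `m` and `n` under the 3x+1 function have the same parities, and
(ii) the induced map from `ℤ/2^kℤ` to `(ℤ/2ℤ)^k` sending the class of `n` to its
parity vector is a bijection. -/
theorem parity_vector_bijection (k : ℕ) (hk : 1 ≤ k) :
    (∀ m n : ℤ, Int.ModEq (2 ^ k) m n →
        ∀ j : ℕ, j < k → Int.ModEq 2 (T^[j] m) (T^[j] n)) ∧
    (∃ Φ : ZMod (2 ^ k) ≃ (Fin k → ZMod 2),
        ∀ n : ℤ, Φ (n : ZMod (2 ^ k)) = fun j : Fin k => ((T^[(j : ℕ)] n : ℤ) : ZMod 2)) := by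
  have part1 : ∀ m n : ℤ, Int.ModEq (2 ^ k) m n →
      ∀ j : ℕ, j < k → Int.ModEq 2 (T^[j] m) (T^[j] n) := by
    intro m n h j hj
    have h1 : Int.ModEq (2 ^ (j + (k - j))) m n := by
      rwa [show j + (k - j) = k by omega]
    have h2 := iter_mod j (k - j) m n h1
    exact h2.of_dvd (dvd_pow_self 2 (by omega))
  refine ⟨part1, ?_⟩
  haveI : NeZero (2 ^ k) := ⟨pow_ne_zero k two_ne_zero⟩
  set f : ZMod (2 ^ k) → (Fin k → ZMod 2) :=
    fun x j => ((T^[(j : ℕ)] ((x.val : ℤ)) : ℤ) : ZMod 2) with hf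
  have hcast : ∀ x : ZMod (2 ^ k), (((x.val : ℤ) : ZMod (2 ^ k))) = x := by
    intro x
    simp [ZMod.natCast_val, ZMod.intCast_cast]
  have hNat : (((2 ^ k : ℕ) : ℤ)) = (2 : ℤ) ^ k := by push_cast; ring
  have key : ∀ n : ℤ, f (n : ZMod (2 ^ k)) =
      fun j : Fin k => ((T^[(j : ℕ)] n : ℤ) : ZMod 2) := by
    intro n
    funext j
    have hmod : Int.ModEq (((2 ^ k : ℕ) : ℤ)) (((n : ZMod (2 ^ k)).val : ℤ)) n :=
      (ZMod.intCast_eq_intCast_iff _ _ _).mp (by rw [hcast])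
    rw [hNat] at hmod
    refine (ZMod.intCast_eq_intCast_iff _ _ _).mpr ?_
    exact_mod_cast part1 _ _ hmod j j.isLt
  have hinj : Function.Injective f := by
    intro x y hxy
    have hm : Int.ModEq (2 ^ k) ((x.val : ℤ)) ((y.val : ℤ)) := by
      refine parity_inj k _ _ (fun j hj => ?_)
      have h2 := congrFun hxy ⟨j, hj⟩
      have := (ZMod.intCast_eq_intCast_iff _ _ _).mp h2
      exact_mod_cast this
    rw [← hNat] at hm
    have := (ZMod.intCast_eq_intCast_iff _ _ _).mpr hm
    rwa [hcast, hcast] at this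
  have hbij : Function.Bijective f := by
    refine (Fintype.bijective_iff_injective_and_card f).mpr ⟨hinj, ?_⟩
    simp [ZMod.card, Fintype.card_fun]
  exact ⟨Equiv.ofBijective f hbij, fun n => key n⟩
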